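/- Let {e₁, …, eₙ} be an orthonormal family in a Hilbert space H, let k₁, …, kₙ ≥ 0, and let f : [a,b] → H be Bochner integrable, such that kᵢ‖f(t)‖ ≤ Re⟨f(t), eᵢ⟩ for each i ∈ {1,…,n} and a.e. t ∈ [a,b]. Then (∑ᵢ₌₁ⁿ kᵢ²)^{1/2} · ∫ₐᵇ ‖f(t)‖ dt ≤ ‖∫ₐᵇ f(t) dt‖. -/

import Mathlib

open MeasureTheory

theorem stmt_8 {𝕜 H : Type*} [RCLike 𝕜] [NormedAddCommGroup H] [InnerProductSpace 𝕜 H]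
    [NormedSpace ℝ H] [IsScalarTower ℝ 𝕜 H] [CompleteSpace H]
    {a b : ℝ} {f : ℝ → H} (hf : IntegrableOn f (Set.Icc a b))
    {n : ℕ} {e : Fin n → H} (he : Orthonormal 𝕜 e)
    {k : Fin n → ℝ} (hk : ∀ i, 0 ≤ k i)
    (h : ∀ i, ∀ᵐ t ∂(volume.restrict (Set.Icc a b)),
      k i * ‖f t‖ ≤ RCLike.re (inner 𝕜 (f t) (e i) : 𝕜)) :
    Real.sqrt (∑ i, (k i) ^ 2) * ∫ t in Set.Icc a b, ‖f t‖ ≤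
      ‖∫ t in Set.Icc a b, f t‖ := by
  set I : H := ∫ t in Set.Icc a b, f t with hI
  set N : ℝ := ∫ t in Set.Icc a b, ‖f t‖ with hN
  have hN0 : 0 ≤ N := integral_nonneg fun t => norm_nonneg _
  -- linear functional x ↦ re ⟪e i, x⟫
  have key : ∀ i, k i * N ≤ RCLike.re (inner 𝕜 (e i) I : 𝕜) := by
    intro i
    set L : H →L[ℝ] ℝ :=
      (RCLike.reCLM : 𝕜 →L[ℝ] ℝ).comp ((innerSL 𝕜 (e i)).restrictScalars ℝ) with hL
    have hLI : L I = RCLike.re (inner 𝕜 (e i) I : 𝕜) := rfl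
    have hcomm : ∫ t in Set.Icc a b, L (f t) = L I :=
      (L.integral_comp_comm hf)
    have hint : IntegrableOn (fun t => L (f t)) (Set.Icc a b) := L.integrable_comp hf
    have hmono : k i * N ≤ ∫ t in Set.Icc a b, L (f t) := by
      rw [show k i * N = ∫ t in Set.Icc a b, k i * ‖f t‖ by
        rw [integral_const_mul]]
      refine integral_mono_ae (hf.norm.const_mul _) hint ?_
      filter_upwards [h i] with t ht
      have : RCLike.re (inner 𝕜 (f t) (e i) : 𝕜) = L (f t) := by
        show RCLike.re (inner 𝕜 (f t) (e i) : 𝕜) = RCLike.re (inner 𝕜 (e i) (f t) : 𝕜)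
        rw [← inner_conj_symm (f t) (e i), RCLike.conj_re]
      linarith [ht, this.symm.le]
    rw [hcomm, hLI] at hmono
    exact hmono
  -- Bessel
  have bessel : ∑ i, ‖(inner 𝕜 (e i) I : 𝕜)‖ ^ 2 ≤ ‖I‖ ^ 2 :=
    he.sum_inner_products_le I
  have step : ∑ i, (k i) ^ 2 * N ^ 2 ≤ ‖I‖ ^ 2 := by
    refine le_trans (Finset.sum_le_sum fun i _ => ?_) bessel
    have h1 : k i * N ≤ ‖(inner 𝕜 (e i) I : 𝕜)‖ :=
      (key i).trans (RCLike.re_le_norm _)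
    have h0 : 0 ≤ k i * N := mul_nonneg (hk i) hN0
    calc (k i) ^ 2 * N ^ 2 = (k i * N) ^ 2 := by ring
      _ ≤ ‖(inner 𝕜 (e i) I : 𝕜)‖ ^ 2 := by nlinarith
  have : (Real.sqrt (∑ i, (k i) ^ 2) * N) ^ 2 ≤ ‖I‖ ^ 2 := by
    rw [mul_pow, Real.sq_sqrt (Finset.sum_nonneg fun i _ => sq_nonneg _)]
    rw [← Finset.sum_mul] at step
    exact step
  have hnn : 0 ≤ Real.sqrt (∑ i, (k i) ^ 2) * N :=
    mul_nonneg (Real.sqrt_nonneg _) hN0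
  nlinarith [norm_nonneg I]
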